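/- Let γ: S¹ → S² ⊂ ℝ³ be a smooth embedded loop avoiding the poles (±1, 0, 0) (coordinates (y₁, x₂, y₂), poles on the y₁-axis), and let τ_ε be the rotation by small angle ε about the x₂-axis. If γ = μ is the meridian great circle S² ∩ {y₂ = 0}, then for all sufficiently small ε ≠ 0, the rotated circle τ_ε(μ) is everywhere transverse to the singular foliation G on S² given by the kernel of the restriction of r² dθ = x₂ dy₂ − y₂ dx₂ (whose leaves are the intersections of S² with the half-planes θ = const through the y₁-axis). -/

import Mathlib

noncomputable section

/- Coordinates on `ℝ³` are `(y₁, x₂, y₂) = (p 0, p 1, p 2)`; the poles of `S²` are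
`(±1, 0, 0)` on the `y₁`-axis. -/

/-- The rotation `τ_ε` (by angle `ε` about the `x₂`-axis) of the meridian great circle
`μ(s) = (cos s, sin s, 0) ∈ S² ∩ {y₂ = 0}`. -/
def gam14 (ε s : ℝ) : Fin 3 → ℝ :=
  ![Real.cos s * Real.cos ε, Real.sin s, Real.cos s * Real.sin ε]

/-- The velocity vector of `s ↦ τ_ε(μ(s))`. -/
def gam14' (ε s : ℝ) : Fin 3 → ℝ :=
  ![-(Real.sin s) * Real.cos ε, Real.cos s, -(Real.sin s) * Real.sin ε]

/-- The 1-form `x₂ dy₂ - y₂ dx₂` (`= r² dθ`), whose kernel restricted to `S²` defines the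
singular foliation `G` with leaves the longitudinal arcs `θ = const`. -/
def beta14 (p v : Fin 3 → ℝ) : ℝ := p 1 * v 2 - p 2 * v 1

/-- for all sufficiently small `ε ≠ 0`, the rotated meridian `τ_ε(μ)` is a
loop on `S²` avoiding the poles `(±1, 0, 0)` and everywhere transverse to the foliation
`G = ker(x₂ dy₂ - y₂ dx₂)|_{S²}`: its velocity vector is never in the kernel of the
1-form. -/
theorem stmt_14 :
    ∃ ε₀ > (0 : ℝ), ∀ ε : ℝ, ε ≠ 0 → |ε| < ε₀ → ∀ s : ℝ,
      HasDerivAt (fun u => gam14 ε u) (gam14' ε s) s ∧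
      (gam14 ε s 0) ^ 2 + (gam14 ε s 1) ^ 2 + (gam14 ε s 2) ^ 2 = 1 ∧
      gam14 ε s ≠ ![1, 0, 0] ∧ gam14 ε s ≠ ![-1, 0, 0] ∧
      beta14 (gam14 ε s) (gam14' ε s) ≠ 0 := by
  refine ⟨Real.pi, Real.pi_pos, fun ε hε hεπ s => ?_⟩
  have hsin : Real.sin ε ≠ 0 := by
    rw [abs_lt] at hεπ
    simp only [ne_eq, Real.sin_eq_zero_iff_of_lt_of_lt hεπ.1 hεπ.2]
    exact hε
  have hpyth : Real.sin s ^ 2 + Real.cos s ^ 2 = 1 := Real.sin_sq_add_cos_sq s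
  have hcirc : (gam14 ε s 0) ^ 2 + (gam14 ε s 1) ^ 2 + (gam14 ε s 2) ^ 2 = 1 := by
    simp only [gam14, Matrix.cons_val_zero, Matrix.cons_val_one, Matrix.head_cons,
      Matrix.cons_val_two, Matrix.tail_cons]
    have h2 : Real.sin ε ^ 2 + Real.cos ε ^ 2 = 1 := Real.sin_sq_add_cos_sq ε
    nlinarith [hpyth, h2]
  refine ⟨?_, hcirc, ?_, ?_, ?_⟩
  · rw [hasDerivAt_pi]
    intro i
    fin_cases i <;> simp only [gam14, gam14', Matrix.cons_val_zero, Matrix.cons_val_one,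
      Matrix.head_cons, Matrix.cons_val_two, Matrix.tail_cons]
    · exact (Real.hasDerivAt_cos s).mul_const _
    · exact Real.hasDerivAt_sin s
    · exact (Real.hasDerivAt_cos s).mul_const _
  · intro h
    have h1 := congrFun h 1
    have h2 := congrFun h 2
    simp only [gam14, Matrix.cons_val_one, Matrix.head_cons, Matrix.cons_val_two,
      Matrix.tail_cons, Matrix.cons_val_zero] at h1 h2
    have hc : Real.cos s = 0 := by
      rcases mul_eq_zero.1 h2 with h | h
      · exact h
      · exact absurd h hsin
    rw [h1, hc] at hpyth; norm_num at hpyth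
  · intro h
    have h1 := congrFun h 1
    have h2 := congrFun h 2
    simp only [gam14, Matrix.cons_val_one, Matrix.head_cons, Matrix.cons_val_two,
      Matrix.tail_cons, Matrix.cons_val_zero] at h1 h2
    have hc : Real.cos s = 0 := by
      rcases mul_eq_zero.1 h2 with h | h
      · exact h
      · exact absurd h hsin
    rw [h1, hc] at hpyth; norm_num at hpyth
  · have : beta14 (gam14 ε s) (gam14' ε s) = -Real.sin ε := by
      simp only [beta14, gam14, gam14', Matrix.cons_val_one, Matrix.head_cons,
        Matrix.cons_val_two, Matrix.tail_cons, Matrix.cons_val_zero]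
      linear_combination (-Real.sin ε) * hpyth
    rw [this]
    exact neg_ne_zero.2 hsin

end
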